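/- There is a surjective group homomorphism from the surface group π_1(F_2) = ⟨x1,y1,x2,y2 | [x1,y1][x2,y2] = 1⟩ to the group G_2 = (Z/2)^4 × Z/2 (with the twisted multiplication) sending x1 ↦ (1,0,0,0,0), y1 ↦ (0,1,0,0,0), x2 ↦ (0,0,1,0,0), y2 ↦ (0,0,0,1,0). -/

import Mathlib

/-- The group `G₂` of order 32: underlying set `(ℤ/2)⁴ × ℤ/2`. -/
@[ext] structure G2 where
  a1 : ZMod 2
  b1 : ZMod 2
  a2 : ZMod 2
  b2 : ZMod 2
  ε : ZMod 2
deriving DecidableEq, Fintype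

namespace G2

/-- The twisted multiplication on `G₂`:
`(a1,b1,a2,b2,ε)·(a1',b1',a2',b2',ε') = (a1+a1',b1+b1',a2+a2',b2+b2',ε+ε'+b1a1'+b2a2')`. -/
def gmul (x y : G2) : G2 :=
  ⟨x.a1 + y.a1, x.b1 + y.b1, x.a2 + y.a2, x.b2 + y.b2,
    x.ε + y.ε + x.b1 * y.a1 + x.b2 * y.a2⟩

def ginv (x : G2) : G2 :=
  ⟨x.a1, x.b1, x.a2, x.b2, x.ε + x.b1 * x.a1 + x.b2 * x.a2⟩

private lemma two_eq_zero (u : ZMod 2) : u + u = 0 := by revert u; decide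

instance : Group G2 where
  mul := gmul
  one := ⟨0, 0, 0, 0, 0⟩
  inv := ginv
  mul_assoc x y z := by
    show gmul (gmul x y) z = gmul x (gmul y z)
    simp only [gmul, mk.injEq]
    refine ⟨by ring, by ring, by ring, by ring, by ring⟩
  one_mul x := by
    show gmul ⟨0, 0, 0, 0, 0⟩ x = x
    ext <;> simp [gmul]
  mul_one x := by
    show gmul x ⟨0, 0, 0, 0, 0⟩ = x
    ext <;> simp [gmul]
  inv_mul_cancel x := by
    show gmul (ginv x) x = ⟨0, 0, 0, 0, 0⟩
    simp only [gmul, ginv, mk.injEq]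
    exact ⟨two_eq_zero _, two_eq_zero _, two_eq_zero _, two_eq_zero _, by
      have h1 := two_eq_zero (x.ε)
      have h2 := two_eq_zero (x.b1 * x.a1)
      have h3 := two_eq_zero (x.b2 * x.a2)
      linear_combination h1 + h2 + h3⟩

@[simp] theorem mul_def (x y : G2) :
    x * y = ⟨x.a1 + y.a1, x.b1 + y.b1, x.a2 + y.a2, x.b2 + y.b2,
      x.ε + y.ε + x.b1 * y.a1 + x.b2 * y.a2⟩ := rfl

@[simp] theorem one_def : (1 : G2) = ⟨0, 0, 0, 0, 0⟩ := rfl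

end G2

open scoped commutatorElement

/-- The surface relator `[x₁,y₁][x₂,y₂]`, where `x₁,y₁,x₂,y₂` are the free generators
indexed by `0,1,2,3`. -/
def surfaceRel : Set (FreeGroup (Fin 4)) :=
  {⁅FreeGroup.of (0 : Fin 4), FreeGroup.of 1⁆ * ⁅FreeGroup.of (2 : Fin 4), FreeGroup.of 3⁆}

/-- The fundamental group of the closed orientable genus-2 surface,
`π₁(F₂) = ⟨x₁,y₁,x₂,y₂ ∣ [x₁,y₁][x₂,y₂] = 1⟩`. -/
abbrev SurfaceGroup2 : Type := PresentedGroup surfaceRel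

/-- The generators `x₁, y₁, x₂, y₂` of `π₁(F₂)`. -/
def sgGen (i : Fin 4) : SurfaceGroup2 := PresentedGroup.of i

def g2f : Fin 4 → G2 := ![⟨1,0,0,0,0⟩, ⟨0,1,0,0,0⟩, ⟨0,0,1,0,0⟩, ⟨0,0,0,1,0⟩]

/-- There is a surjective homomorphism `ψ₂ : π₁(F₂) → G₂` with
`x₁ ↦ (1,0,0,0,0)`, `y₁ ↦ (0,1,0,0,0)`, `x₂ ↦ (0,0,1,0,0)`, `y₂ ↦ (0,0,0,1,0)`. -/
theorem exists_surjective_surfaceGroup_to_G2 :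
    ∃ ψ : SurfaceGroup2 →* G2, Function.Surjective ψ ∧
      ψ (sgGen 0) = ⟨1, 0, 0, 0, 0⟩ ∧
      ψ (sgGen 1) = ⟨0, 1, 0, 0, 0⟩ ∧
      ψ (sgGen 2) = ⟨0, 0, 1, 0, 0⟩ ∧
      ψ (sgGen 3) = ⟨0, 0, 0, 1, 0⟩ := by
  have hf : ∀ r ∈ surfaceRel, FreeGroup.lift g2f r = 1 := by
    intro r hr
    rcases hr with rfl
    decide
  have hof : ∀ i, PresentedGroup.toGroup hf (sgGen i) = g2f i := fun i =>
    PresentedGroup.toGroup.of hf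
  refine ⟨PresentedGroup.toGroup hf, ?_, hof 0, hof 1, hof 2, hof 3⟩
  intro g
  have h1 : (⟨1,0,0,0,0⟩ : G2) ∈ (PresentedGroup.toGroup hf).range := ⟨sgGen 0, hof 0⟩
  have h2 : (⟨0,1,0,0,0⟩ : G2) ∈ (PresentedGroup.toGroup hf).range := ⟨sgGen 1, hof 1⟩
  have h3 : (⟨0,0,1,0,0⟩ : G2) ∈ (PresentedGroup.toGroup hf).range := ⟨sgGen 2, hof 2⟩
  have h4 : (⟨0,0,0,1,0⟩ : G2) ∈ (PresentedGroup.toGroup hf).range := ⟨sgGen 3, hof 3⟩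
  have h5 : (⟨0,0,0,0,1⟩ : G2) ∈ (PresentedGroup.toGroup hf).range := by
    have := Subgroup.mul_mem _ (Subgroup.mul_mem _ (Subgroup.mul_mem _ h2 h1)
      ((Subgroup.inv_mem_iff _).mpr h2)) ((Subgroup.inv_mem_iff _).mpr h1)
    convert this using 2
    all_goals decide
  have : g = (⟨1,0,0,0,0⟩:G2)^(g.a1.val) * (⟨0,1,0,0,0⟩:G2)^(g.b1.val) *
      (⟨0,0,1,0,0⟩:G2)^(g.a2.val) * (⟨0,0,0,1,0⟩:G2)^(g.b2.val) *
      (⟨0,0,0,0,1⟩:G2)^(g.ε.val) := by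
    revert g; decide
  rw [this]
  exact Subgroup.mul_mem _ (Subgroup.mul_mem _ (Subgroup.mul_mem _ (Subgroup.mul_mem _
    (Subgroup.pow_mem _ h1 _) (Subgroup.pow_mem _ h2 _)) (Subgroup.pow_mem _ h3 _))
    (Subgroup.pow_mem _ h4 _)) (Subgroup.pow_mem _ h5 _)
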